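/- Largest eigenvalue of random Rademacher outer products: let V̄_1,…,V̄_m be i.i.d. uniform on {−1/2, 1/2}^n and Ā_m = (1/m)·∑_{i=1}^m V̄_i V̄_iᵀ. There exist absolute constants c₂, c₃ > 0 (one may take c₂ = 425/32, c₃ = 8) such that P(λ_max(Ā_m) > c₂) ≤ exp(c₃·n − m/2). -/

import Mathlib

open Matrix Finset MeasureTheory Metric Real
open scoped ENNReal

lemma packing_bound (n : ℕ) (hn : 0 < n) (s : Finset (EuclideanSpace ℝ (Fin n)))
    (h1 : ∀ y ∈ s, ‖y‖ = 1)
    (hsep : ∀ y ∈ s, ∀ z ∈ s, y ≠ z → 1/4 < dist y z) :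
    s.card ≤ 9 ^ n := by
  haveI : Nonempty (Fin n) := ⟨⟨0, hn⟩⟩
  have hdisj : (↑s : Set (EuclideanSpace ℝ (Fin n))).PairwiseDisjoint
      (fun y => ball y (1/8)) := by
    intro y hy z hz hyz
    exact ball_disjoint_ball (by linarith [hsep y hy z hz hyz])
  have hsub : (⋃ y ∈ s, ball y (1/8)) ⊆ ball (0 : EuclideanSpace ℝ (Fin n)) (9/8) := by
    intro z hz
    simp only [Set.mem_iUnion] at hz
    obtain ⟨y, hy, hzy⟩ := hz
    rw [mem_ball] at hzy ⊢
    have : dist z 0 ≤ dist z y + dist y 0 := dist_triangle _ _ _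
    have hy0 : dist y 0 = 1 := by simpa [dist_eq_norm] using h1 y hy
    linarith
  have hmeas := measure_biUnion_finset hdisj (fun y _ => measurableSet_ball)
    (μ := (volume : Measure (EuclideanSpace ℝ (Fin n))))
  have hle : ∑ y ∈ s, volume (ball y (1/8)) ≤
      volume (ball (0 : EuclideanSpace ℝ (Fin n)) (9/8)) := by
    rw [← hmeas]; exact measure_mono hsub
  rw [Finset.sum_congr rfl (fun y _ => EuclideanSpace.volume_ball (Fin n) y (1/8)),
    EuclideanSpace.volume_ball, Finset.sum_const, Fintype.card_fin] at hle
  set C : ℝ≥0∞ := ENNReal.ofReal (Real.sqrt Real.pi ^ n / Real.Gamma (n / 2 + 1)) with hC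
  have hCpos : 0 < C := by
    rw [hC, ENNReal.ofReal_pos]
    exact div_pos (pow_pos (Real.sqrt_pos.2 Real.pi_pos) n)
      (Real.Gamma_pos_of_pos (by positivity))
  have hCne : C ≠ ∞ := ENNReal.ofReal_ne_top
  have hle2 : (s.card : ℝ≥0∞) * ENNReal.ofReal (1/8) ^ n ≤ ENNReal.ofReal (9/8) ^ n := by
    rw [nsmul_eq_mul, ← mul_assoc] at hle
    exact (ENNReal.mul_le_mul_iff_left hCpos.ne' hCne).1 hle
  have hfin : (s.card : ℝ≥0∞) ≤ ((9:ℕ) : ℝ≥0∞) ^ n := by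
    have h2 := mul_le_mul_left hle2 (ENNReal.ofReal 8 ^ n)
    rw [mul_assoc, ← mul_pow, ← mul_pow, ← ENNReal.ofReal_mul (by norm_num),
      ← ENNReal.ofReal_mul (by norm_num)] at h2
    norm_num at h2
    convert h2 using 2
    norm_num
  have : ((s.card : ℕ) : ℝ≥0∞) ≤ ((9^n : ℕ) : ℝ≥0∞) := by push_cast; exact hfin
  exact_mod_cast this

lemma net_exists (n : ℕ) (hn : 0 < n) :
    ∃ N : Finset (EuclideanSpace ℝ (Fin n)), N.card ≤ 9 ^ n ∧ (∀ y ∈ N, ‖y‖ = 1) ∧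
      ∀ x : EuclideanSpace ℝ (Fin n), ‖x‖ = 1 → ∃ y ∈ N, dist x y ≤ 1/4 := by
  classical
  set P : Finset (EuclideanSpace ℝ (Fin n)) → Prop :=
    fun s => (∀ y ∈ s, ‖y‖ = 1) ∧ ∀ y ∈ s, ∀ z ∈ s, y ≠ z → 1/4 < dist y z with hP
  set Cset : Set ℕ := {c | ∃ s, P s ∧ s.card = c} with hCset
  have h0 : 0 ∈ Cset := ⟨∅, ⟨by simp, by simp⟩, rfl⟩
  have hbdd : BddAbove Cset := by
    refine ⟨9 ^ n, fun c hc => ?_⟩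
    obtain ⟨s, hs, rfl⟩ := hc
    exact packing_bound n hn s hs.1 hs.2
  obtain ⟨s, hs, hcard⟩ : ∃ s, P s ∧ s.card = sSup Cset := Nat.sSup_mem ⟨0, h0⟩ hbdd
  refine ⟨s, ?_, hs.1, ?_⟩
  · exact packing_bound n hn s hs.1 hs.2
  · intro x hx
    by_contra hcon
    push_neg at hcon
    have hxs : x ∉ s := fun hxs => by
      have := hcon x hxs; rw [dist_self] at this; norm_num at this
    have hP' : P (insert x s) := by
      constructor
      · intro y hy
        rcases Finset.mem_insert.1 hy with rfl | hy
        · exact hx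
        · exact hs.1 y hy
      · intro y hy z hz hyz
        rcases Finset.mem_insert.1 hy with hy' | hy' <;>
          rcases Finset.mem_insert.1 hz with hz' | hz'
        · exact absurd (hy'.trans hz'.symm) hyz
        · subst hy'; exact hcon z hz'
        · subst hz'; rw [dist_comm]; exact hcon y hy'
        · exact hs.2 y hy' z hz' hyz
    have hmem : s.card + 1 ∈ Cset := ⟨insert x s, hP', by rw [Finset.card_insert_of_notMem hxs]⟩
    have := le_csSup hbdd hmem
    omega

lemma integrable_exp_linear_quad (a : ℝ) :
    Integrable (fun g : ℝ => Real.exp (a * g - g^2/2)) := by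
  have h : (fun g : ℝ => Real.exp (a * g - g^2/2))
      = fun g => Real.exp (a^2/2) * Real.exp (-(1/2) * (g - a)^2) := by
    funext g; rw [← Real.exp_add]; congr 1; ring
  rw [h]
  exact ((integrable_exp_neg_mul_sq (by norm_num : (0:ℝ) < 1/2)).comp_sub_right a).const_mul _

lemma integral_exp_linear_quad (a : ℝ) :
    ∫ g : ℝ, Real.exp (a * g - g^2/2) = Real.sqrt (2*Real.pi) * Real.exp (a^2/2) := by
  have h : (fun g : ℝ => Real.exp (a * g - g^2/2))
      = fun g => Real.exp (a^2/2) * Real.exp (-(1/2) * (g - a)^2) := by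
    funext g; rw [← Real.exp_add]; congr 1; ring
  rw [h, MeasureTheory.integral_const_mul,
    integral_sub_right_eq_self (fun g => Real.exp (-(1/2) * g^2)) a,
    integral_gaussian]
  rw [show Real.pi / (1/2) = 2 * Real.pi by ring, mul_comm]

lemma sum_exp_linear (n : ℕ) (y : Fin n → ℝ) (hy : ∑ i, y i ^ 2 = 1) (t : ℝ) :
    ∑ b : Fin n → Bool, Real.exp (t * ∑ i, (if b i then (1/2:ℝ) else -(1/2)) * y i)
      ≤ 2^n * Real.exp (t^2/8) := by
  have hrw : ∀ b : Fin n → Bool,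
      Real.exp (t * ∑ i, (if b i then (1/2:ℝ) else -(1/2)) * y i)
        = ∏ i, Real.exp (t * ((if b i then (1/2:ℝ) else -(1/2)) * y i)) := by
    intro b; rw [← Real.exp_sum, Finset.mul_sum]
  rw [Finset.sum_congr rfl fun b _ => hrw b,
    ← Fintype.prod_sum (fun i (β : Bool) => Real.exp (t * ((if β then (1/2:ℝ) else -(1/2)) * y i)))]
  calc ∏ i, ∑ β : Bool, Real.exp (t * ((if β then (1/2:ℝ) else -(1/2)) * y i))
      ≤ ∏ i, 2 * Real.exp (t^2 * y i ^2 / 8) := by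
        refine Finset.prod_le_prod (fun i _ => by positivity) (fun i _ => ?_)
        rw [Fintype.sum_bool]
        simp only [reduceIte, Bool.false_eq_true, if_false, if_true]
        have h1 : t * (-(1/2) * y i) = -(t * (y i) / 2) := by ring
        have h2 : t * ((1/2:ℝ) * y i) = t * (y i) / 2 := by ring
        rw [h1, h2]
        have := Real.cosh_le_exp_half_sq (t * y i / 2)
        rw [Real.cosh_eq] at this
        calc Real.exp (t * y i / 2) + Real.exp (-(t * y i / 2))
            = 2 * ((Real.exp (t * y i / 2) + Real.exp (-(t * y i / 2)))/2) := by ring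
          _ ≤ 2 * Real.exp ((t * y i / 2)^2 / 2) := by linarith
          _ = 2 * Real.exp (t^2 * y i ^2 / 8) := by congr 1; ring_nf
    _ = 2^n * Real.exp (t^2/8) := by
        rw [Finset.prod_mul_distrib, Finset.prod_const, ← Real.exp_sum]
        congr 2
        · simp
        · rw [show (fun i => t^2 * y i ^2 / 8) = fun i => t^2/8 * y i ^2 from by funext i; ring]
          rw [← Finset.mul_sum, hy, mul_one]

lemma sum_exp_sq (n : ℕ) (y : Fin n → ℝ) (hy : ∑ i, y i ^ 2 = 1) :
    ∑ b : Fin n → Bool, Real.exp ((∑ i, (if b i then (1/2:ℝ) else -(1/2)) * y i)^2)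
      ≤ 2^n * Real.sqrt 2 := by
  set w : (Fin n → Bool) → ℝ := fun b => ∑ i, (if b i then (1/2:ℝ) else -(1/2)) * y i with hw
  have key : ∀ b, Real.exp ((w b)^2)
      = (Real.sqrt (2*Real.pi))⁻¹ * ∫ g : ℝ, Real.exp ((Real.sqrt 2 * w b) * g - g^2/2) := by
    intro b
    rw [integral_exp_linear_quad,
      show (Real.sqrt 2 * w b)^2 / 2 = (Real.sqrt 2)^2 * ((w b)^2 / 2) from by ring,
      Real.sq_sqrt (by norm_num : (0:ℝ) ≤ 2),
      show (2 * ((w b)^2 / 2) : ℝ) = (w b)^2 from by ring,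
      ← mul_assoc, inv_mul_cancel₀ (by positivity), one_mul]
  calc ∑ b : Fin n → Bool, Real.exp ((w b)^2)
      = (Real.sqrt (2*Real.pi))⁻¹ *
        ∑ b : Fin n → Bool, ∫ g : ℝ, Real.exp ((Real.sqrt 2 * w b) * g - g^2/2) := by
        rw [Finset.mul_sum]; exact Finset.sum_congr rfl fun b _ => key b
    _ = (Real.sqrt (2*Real.pi))⁻¹ *
        ∫ g : ℝ, ∑ b : Fin n → Bool, Real.exp ((Real.sqrt 2 * w b) * g - g^2/2) := by
        rw [MeasureTheory.integral_finset_sum _ (fun b _ => integrable_exp_linear_quad _)]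
    _ ≤ (Real.sqrt (2*Real.pi))⁻¹ * ∫ g : ℝ, (2:ℝ)^n * Real.exp (-(1/4) * g^2) := by
        refine mul_le_mul_of_nonneg_left ?_ (by positivity)
        refine MeasureTheory.integral_mono
          (integrable_finset_sum _ (fun b _ => integrable_exp_linear_quad _))
          ((integrable_exp_neg_mul_sq (by norm_num : (0:ℝ) < 1/4)).const_mul _) ?_
        intro g
        calc ∑ b : Fin n → Bool, Real.exp ((Real.sqrt 2 * w b) * g - g^2/2)
            = (∑ b : Fin n → Bool, Real.exp ((Real.sqrt 2 * g) * w b)) * Real.exp (-(g^2/2)) := by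
              rw [Finset.sum_mul]
              exact Finset.sum_congr rfl fun b _ => by
                rw [← Real.exp_add]; congr 1; ring
          _ ≤ (2^n * Real.exp ((Real.sqrt 2 * g)^2/8)) * Real.exp (-(g^2/2)) :=
              mul_le_mul_of_nonneg_right (sum_exp_linear n y hy _) (le_of_lt (Real.exp_pos _))
          _ = 2^n * Real.exp (-(1/4) * g^2) := by
              rw [mul_assoc, ← Real.exp_add]
              congr 2
              rw [mul_pow, Real.sq_sqrt (by norm_num : (0:ℝ) ≤ 2)]
              ring
    _ = (Real.sqrt (2*Real.pi))⁻¹ * ((2:ℝ)^n * Real.sqrt (Real.pi / (1/4))) := by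
        rw [MeasureTheory.integral_const_mul, integral_gaussian]
    _ = 2^n * Real.sqrt 2 := by
        have h4 : Real.sqrt (Real.pi/(1/4)) = 2 * Real.sqrt Real.pi := by
          rw [show Real.pi/(1/4) = 2^2 * Real.pi from by ring,
            Real.sqrt_mul (by positivity), Real.sqrt_sq (by norm_num)]
        have h2 : Real.sqrt (2*Real.pi) = Real.sqrt 2 * Real.sqrt Real.pi :=
          Real.sqrt_mul (by norm_num) _
        have hπ : Real.sqrt Real.pi ≠ 0 := by positivity
        have hs2 : Real.sqrt 2 ≠ 0 := by positivity
        have key2 : (Real.sqrt 2 * Real.sqrt Real.pi)⁻¹ * ((2:ℝ)^n * (2 * Real.sqrt Real.pi))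
            = 2^n * (2 / Real.sqrt 2) := by
          field_simp
        rw [h4, h2, key2, Real.div_sqrt]

lemma iid_prod_bound (n m : ℕ) (y : Fin n → ℝ) (hy : ∑ i, y i ^ 2 = 1) :
    ∑ V : Fin m → Fin n → Bool,
        Real.exp (∑ j, (∑ i, (if V j i then (1/2:ℝ) else -(1/2)) * y i)^2)
      ≤ ((2:ℝ)^n * Real.sqrt 2)^m := by
  have hrw : ∀ V : Fin m → Fin n → Bool,
      Real.exp (∑ j, (∑ i, (if V j i then (1/2:ℝ) else -(1/2)) * y i)^2)
        = ∏ j, Real.exp ((∑ i, (if V j i then (1/2:ℝ) else -(1/2)) * y i)^2) :=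
    fun V => by rw [← Real.exp_sum]
  rw [Finset.sum_congr rfl fun V _ => hrw V,
    ← Fintype.prod_sum (fun (j : Fin m) (b : Fin n → Bool) =>
        Real.exp ((∑ i, (if b i then (1/2:ℝ) else -(1/2)) * y i)^2))]
  rw [Finset.prod_const]
  rw [Finset.card_univ, Fintype.card_fin]
  exact pow_le_pow_left₀ (Finset.sum_nonneg fun b _ => (Real.exp_pos _).le)
    (sum_exp_sq n y hy) m

lemma markov_pmf (n m : ℕ) (hn : 0 < n) (hm : 0 < m)
    (f : (Fin m → Fin n → Bool) → ℝ) (a : ℝ) :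
    (PMF.uniformOfFintype (Fin m → Fin n → Bool)).toMeasure {V | a < f V}
      ≤ ENNReal.ofReal ((Fintype.card (Fin m → Fin n → Bool) : ℝ)⁻¹ *
          ∑ V : Fin m → Fin n → Bool, Real.exp (f V - a)) := by
  have hcard : (0:ℝ) < (Fintype.card (Fin m → Fin n → Bool) : ℝ) := by
    exact_mod_cast Fintype.card_pos
  rw [PMF.toMeasure_apply_fintype]
  calc ∑ V : Fin m → Fin n → Bool,
        Set.indicator {V | a < f V} (PMF.uniformOfFintype (Fin m → Fin n → Bool)) V
      ≤ ∑ V : Fin m → Fin n → Bool,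
          ENNReal.ofReal ((Fintype.card (Fin m → Fin n → Bool) : ℝ)⁻¹ * Real.exp (f V - a)) := by
        refine Finset.sum_le_sum fun V _ => ?_
        by_cases hV : V ∈ {V | a < f V}
        · rw [Set.indicator_of_mem hV, PMF.uniformOfFintype_apply]
          have h1 : (Fintype.card (Fin m → Fin n → Bool) : ℝ≥0∞)⁻¹
              = ENNReal.ofReal ((Fintype.card (Fin m → Fin n → Bool) : ℝ)⁻¹) := by
            rw [ENNReal.ofReal_inv_of_pos hcard, ENNReal.ofReal_natCast]
          rw [h1]
          apply ENNReal.ofReal_le_ofReal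
          have : (1:ℝ) ≤ Real.exp (f V - a) := by
            rw [Real.one_le_exp_iff]
            have : a < f V := hV
            linarith
          nlinarith [inv_nonneg.2 hcard.le]
        · rw [Set.indicator_of_notMem hV]
          exact zero_le
    _ = ENNReal.ofReal ((Fintype.card (Fin m → Fin n → Bool) : ℝ)⁻¹ *
          ∑ V : Fin m → Fin n → Bool, Real.exp (f V - a)) := by
        rw [← ENNReal.ofReal_sum_of_nonneg (fun V _ => by positivity), Finset.mul_sum]

lemma chernoff_y (n m : ℕ) (hn : 0 < n) (hm : 0 < m) (y : Fin n → ℝ)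
    (hy : ∑ i, y i ^ 2 = 1) :
    (PMF.uniformOfFintype (Fin m → Fin n → Bool)).toMeasure
      {V | (425/64 : ℝ) * m < ∑ j, (∑ i, (if V j i then (1/2:ℝ) else -(1/2)) * y i)^2}
      ≤ ENNReal.ofReal (Real.exp (-(m:ℝ)/2)) := by
  refine (markov_pmf n m hn hm _ _).trans (ENNReal.ofReal_le_ofReal ?_)
  have hcard : (Fintype.card (Fin m → Fin n → Bool) : ℝ) = ((2:ℝ)^n)^m := by
    rw [Fintype.card_fun]
    push_cast
    rw [Fintype.card_fun]
    push_cast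
    simp
  have hsum : ∑ V : Fin m → Fin n → Bool,
      Real.exp ((∑ j, (∑ i, (if V j i then (1/2:ℝ) else -(1/2)) * y i)^2) - (425/64 : ℝ) * m)
      = Real.exp (-(425/64 : ℝ) * m) * ∑ V : Fin m → Fin n → Bool,
          Real.exp (∑ j, (∑ i, (if V j i then (1/2:ℝ) else -(1/2)) * y i)^2) := by
    rw [Finset.mul_sum]
    refine Finset.sum_congr rfl fun V _ => ?_
    rw [← Real.exp_add]
    congr 1
    ring
  rw [hsum, hcard]
  have hbound := iid_prod_bound n m y hy
  have hpos : (0:ℝ) < ((2:ℝ)^n)^m := by positivity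
  calc (((2:ℝ)^n)^m)⁻¹ * (Real.exp (-(425/64 : ℝ) * m) *
        ∑ V : Fin m → Fin n → Bool,
          Real.exp (∑ j, (∑ i, (if V j i then (1/2:ℝ) else -(1/2)) * y i)^2))
      ≤ (((2:ℝ)^n)^m)⁻¹ * (Real.exp (-(425/64 : ℝ) * m) * (((2:ℝ)^n * Real.sqrt 2)^m)) := by
        have he : (0:ℝ) < Real.exp (-(425/64 : ℝ) * m) := Real.exp_pos _
        have h1 : (0:ℝ) ≤ (((2:ℝ)^n)^m)⁻¹ := by positivity
        apply mul_le_mul_of_nonneg_left _ h1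
        exact mul_le_mul_of_nonneg_left hbound he.le
    _ = Real.exp (-(425/64 : ℝ) * m) * (Real.sqrt 2)^m := by
        rw [mul_pow]
        field_simp
    _ ≤ Real.exp (-(m:ℝ)/2) := by
        have h2 : Real.sqrt 2 ≤ Real.exp (393/64 : ℝ) := by
          have ha : Real.sqrt 2 ≤ 2 := by
            nlinarith [Real.sq_sqrt (by norm_num : (0:ℝ) ≤ 2), Real.sqrt_nonneg 2]
          have hb : (2:ℝ) ≤ Real.exp (393/64 : ℝ) := by
            have := Real.add_one_le_exp (393/64 : ℝ)
            linarith
          linarith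
        have h3 : (Real.sqrt 2)^m ≤ Real.exp ((393/64 : ℝ) * m) := by
          calc (Real.sqrt 2)^m ≤ (Real.exp (393/64 : ℝ))^m :=
              pow_le_pow_left₀ (Real.sqrt_nonneg 2) h2 m
            _ = Real.exp ((393/64 : ℝ) * m) := by
              rw [← Real.exp_nat_mul]; ring_nf
        calc Real.exp (-(425/64 : ℝ) * m) * (Real.sqrt 2)^m
            ≤ Real.exp (-(425/64 : ℝ) * m) * Real.exp ((393/64 : ℝ) * m) :=
              mul_le_mul_of_nonneg_left h3 (Real.exp_pos _).le
          _ = Real.exp (-(m:ℝ)/2) := by rw [← Real.exp_add]; congr 1; ring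

lemma quad_form_id (n m : ℕ) (u : Fin m → Fin n → ℝ) (x : Fin n → ℝ) :
    x ⬝ᵥ ((m : ℝ)⁻¹ • ∑ j, vecMulVec (u j) (u j)) *ᵥ x
      = (m : ℝ)⁻¹ * ∑ j, (∑ i, u j i * x i)^2 := by
  simp only [dotProduct, mulVec, Matrix.smul_apply, Matrix.sum_apply, vecMulVec_apply,
    smul_eq_mul]
  calc ∑ i, x i * ∑ k, ((m:ℝ)⁻¹ * ∑ j, u j i * u j k) * x k
      = ∑ i, ∑ k, ∑ j, (m:ℝ)⁻¹ * (u j i * x i) * (u j k * x k) := by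
        refine Finset.sum_congr rfl fun i _ => ?_
        rw [Finset.mul_sum]
        refine Finset.sum_congr rfl fun k _ => ?_
        rw [show x i * (((m:ℝ)⁻¹ * ∑ j, u j i * u j k) * x k)
            = (∑ j, u j i * u j k) * ((m:ℝ)⁻¹ * x i * x k) from by ring, Finset.sum_mul]
        exact Finset.sum_congr rfl fun j _ => by ring
    _ = ∑ j, ∑ i, ∑ k, (m:ℝ)⁻¹ * (u j i * x i) * (u j k * x k) := by
        rw [Finset.sum_congr rfl fun i (_ : i ∈ Finset.univ) =>
          Finset.sum_comm (s := Finset.univ) (t := Finset.univ)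
            (f := fun k j => (m:ℝ)⁻¹ * (u j i * x i) * (u j k * x k))]
        exact Finset.sum_comm
    _ = (m : ℝ)⁻¹ * ∑ j, (∑ i, u j i * x i)^2 := by
        rw [Finset.mul_sum]
        refine Finset.sum_congr rfl fun j _ => ?_
        rw [sq, Finset.sum_mul_sum, Finset.mul_sum]
        refine Finset.sum_congr rfl fun i _ => ?_
        rw [Finset.mul_sum]
        exact Finset.sum_congr rfl fun k _ => by ring

lemma det_reduce (n m : ℕ) (hn : 0 < n) (hm : 0 < m) (u : Fin m → Fin n → ℝ)
    (N : Finset (EuclideanSpace ℝ (Fin n))) (hN1 : ∀ y ∈ N, ‖y‖ = 1)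
    (hNnet : ∀ x : EuclideanSpace ℝ (Fin n), ‖x‖ = 1 → ∃ y ∈ N, dist x y ≤ 1/4)
    (x : Fin n → ℝ)
    (hx : (425/32:ℝ) * ∑ i, x i ^ 2 < (m:ℝ)⁻¹ * ∑ j, (∑ i, u j i * x i)^2) :
    ∃ y ∈ N, (425/64:ℝ) * m < ∑ j, (∑ i, u j i * y i)^2 := by
  set B : EuclideanSpace ℝ (Fin n) → ℝ := fun z => ∑ j, (∑ i, u j i * z i)^2 with hB
  have hBnonneg : ∀ z, 0 ≤ B z := fun z => Finset.sum_nonneg fun j _ => sq_nonneg _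
  have hBcont : Continuous B := by
    refine continuous_finset_sum _ fun j _ => ?_
    exact (continuous_finset_sum _ fun i _ => continuous_const.mul
      ((continuous_apply i).comp (PiLp.continuous_ofLp 2 fun _ : Fin n => ℝ))).pow 2
  have hBhom : ∀ (c : ℝ) (z : EuclideanSpace ℝ (Fin n)), B (c • z) = c^2 * B z := by
    intro c z
    simp only [hB]
    rw [Finset.mul_sum]
    refine Finset.sum_congr rfl fun j _ => ?_
    have h1 : ∑ i, u j i * (c • z) i = c * ∑ i, u j i * z i := by
      rw [Finset.mul_sum]
      refine Finset.sum_congr rfl fun i _ => ?_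
      have h2 : (c • z) i = c * z i := rfl
      rw [h2]; ring
    rw [h1]; ring
  have hnormsq : ∀ z : EuclideanSpace ℝ (Fin n), ‖z‖^2 = ∑ i, z i ^2 := by
    intro z
    rw [EuclideanSpace.norm_eq, Real.sq_sqrt (Finset.sum_nonneg fun i _ => sq_nonneg _)]
    exact Finset.sum_congr rfl fun i _ => by rw [Real.norm_eq_abs, sq_abs]
  have hsne : (Metric.sphere (0 : EuclideanSpace ℝ (Fin n)) 1).Nonempty := by
    refine ⟨EuclideanSpace.single ⟨0, hn⟩ 1, ?_⟩
    rw [mem_sphere_zero_iff_norm, EuclideanSpace.norm_single]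
    norm_num
  obtain ⟨xs, hxsmem, hxsmax⟩ :=
    (isCompact_sphere (0 : EuclideanSpace ℝ (Fin n)) 1).exists_isMaxOn hsne hBcont.continuousOn
  have hxs_norm : ‖xs‖ = 1 := mem_sphere_zero_iff_norm.1 hxsmem
  set M := B xs with hM
  have hMnonneg : 0 ≤ M := hBnonneg xs
  have hBle : ∀ z, B z ≤ M * ‖z‖^2 := by
    intro z
    rcases eq_or_ne z 0 with rfl | hz
    · have : B 0 = 0 := by
        simp only [hB]
        refine Finset.sum_eq_zero fun j _ => ?_
        have : ∑ i, u j i * (0 : EuclideanSpace ℝ (Fin n)) i = 0 :=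
          Finset.sum_eq_zero fun i _ => by
            have : (0 : EuclideanSpace ℝ (Fin n)) i = 0 := rfl
            rw [this, mul_zero]
        rw [this]; norm_num
      rw [this]; positivity
    · have hznorm : (0:ℝ) < ‖z‖ := norm_pos_iff.2 hz
      have hmem : (‖z‖⁻¹ • z) ∈ Metric.sphere (0 : EuclideanSpace ℝ (Fin n)) 1 := by
        rw [mem_sphere_zero_iff_norm, norm_smul, norm_inv, norm_norm,
          inv_mul_cancel₀ hznorm.ne']
      have h1 : B (‖z‖⁻¹ • z) ≤ M := hxsmax hmem
      have h2 := hBhom (‖z‖⁻¹) z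
      rw [h2] at h1
      have h4 : ‖z‖⁻¹ ^ 2 * ‖z‖ ^ 2 = 1 := by
        rw [← mul_pow, inv_mul_cancel₀ hznorm.ne', one_pow]
      calc B z = (‖z‖⁻¹ ^ 2 * ‖z‖ ^ 2) * B z := by rw [h4, one_mul]
        _ = (‖z‖⁻¹ ^ 2 * B z) * ‖z‖ ^ 2 := by ring
        _ ≤ M * ‖z‖ ^ 2 := mul_le_mul_of_nonneg_right h1 (sq_nonneg _)
  -- x as a point of EuclideanSpace
  set xE : EuclideanSpace ℝ (Fin n) := (WithLp.equiv 2 (Fin n → ℝ)).symm x with hxE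
  have hxE_apply : ∀ i, xE i = x i := fun i => rfl
  have hBxE : B xE = ∑ j, (∑ i, u j i * x i)^2 := by
    simp only [hB]
    exact Finset.sum_congr rfl fun j _ => by
      rw [Finset.sum_congr rfl fun i (_ : i ∈ Finset.univ) => by rw [hxE_apply i]]
  have hx2pos : (0:ℝ) < ∑ i, x i ^ 2 := by
    rcases lt_or_eq_of_le (Finset.sum_nonneg fun i (_ : i ∈ Finset.univ) =>
      sq_nonneg (x i)) with h | h
    · exact h
    · exfalso
      have hxi : ∀ i ∈ Finset.univ, x i ^ 2 = 0 :=
        (Finset.sum_eq_zero_iff_of_nonneg (fun i _ => sq_nonneg (x i))).1 h.symm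
      have hxi' : ∀ i, x i = 0 := fun i =>
        (pow_eq_zero_iff two_ne_zero).1 (hxi i (Finset.mem_univ i))
      simp only [hxi', mul_zero, Finset.sum_const, smul_eq_mul] at hx
      norm_num at hx
  have hmpos : (0:ℝ) < m := by exact_mod_cast hm
  have hMbig : (425/32:ℝ) * m < M := by
    have h1 : B xE ≤ M * ‖xE‖^2 := hBle xE
    rw [hnormsq xE] at h1
    rw [Finset.sum_congr rfl fun i (_ : i ∈ Finset.univ) => by rw [hxE_apply i]] at h1
    rw [hBxE] at *
    have h2 : (425/32:ℝ) * ∑ i, x i ^ 2 < (m:ℝ)⁻¹ * (M * ∑ i, x i ^ 2) :=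
      lt_of_lt_of_le hx (by
        apply mul_le_mul_of_nonneg_left h1 (by positivity))
    have h5 := (mul_lt_mul_iff_right₀ hmpos).2 h2
    rw [show (m:ℝ) * ((m:ℝ)⁻¹ * (M * ∑ i, x i ^ 2)) = M * ∑ i, x i ^ 2 from by
      field_simp] at h5
    nlinarith [h5, hx2pos]
  obtain ⟨y, hyN, hdist⟩ := hNnet xs hxs_norm
  refine ⟨y, hyN, ?_⟩
  set d : EuclideanSpace ℝ (Fin n) := y - xs with hd
  have hdnorm : ‖d‖ ≤ 1/4 := by
    rw [hd, ← dist_eq_norm, dist_comm]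
    exact hdist
  have hd2 : ‖d‖^2 ≤ (1/4:ℝ)^2 := by nlinarith [norm_nonneg d]
  have hBd : B d ≤ M * (1/4:ℝ)^2 :=
    (hBle d).trans (mul_le_mul_of_nonneg_left hd2 hMnonneg)
  set cross : ℝ := ∑ j, (∑ i, u j i * xs i) * (∑ i, u j i * d i) with hcross
  have hyd : ∀ i, y i = xs i + d i := fun i => by
    rw [hd]
    have : (y - xs : EuclideanSpace ℝ (Fin n)) i = y i - xs i := rfl
    rw [this]; ring
  have hsplit : ∀ j, ∑ i, u j i * y i = (∑ i, u j i * xs i) + (∑ i, u j i * d i) := by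
    intro j
    rw [← Finset.sum_add_distrib]
    exact Finset.sum_congr rfl fun i _ => by rw [hyd i]; ring
  have hexp : ∑ j, (∑ i, u j i * y i)^2 = M + 2 * cross + B d := by
    rw [hM, hB, hcross, Finset.mul_sum, ← Finset.sum_add_distrib, ← Finset.sum_add_distrib]
    exact Finset.sum_congr rfl fun j _ => by rw [hsplit j]; ring
  have hcs : cross^2 ≤ M * (M * (1/4:ℝ)^2) := by
    have h1 := Finset.sum_mul_sq_le_sq_mul_sq Finset.univ
      (fun j => ∑ i, u j i * xs i) (fun j => ∑ i, u j i * d i)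
    have h2 : (∑ j, (∑ i, u j i * xs i)^2) = M := rfl
    have h3 : (∑ j, (∑ i, u j i * d i)^2) = B d := rfl
    calc cross^2 ≤ (∑ j, (∑ i, u j i * xs i)^2) * (∑ j, (∑ i, u j i * d i)^2) := h1
      _ = M * B d := by rw [h2, h3]
      _ ≤ M * (M * (1/4:ℝ)^2) := mul_le_mul_of_nonneg_left hBd hMnonneg
  have hcross_lb : -(M/4) ≤ cross := by nlinarith [hMnonneg]
  rw [hexp]
  have := hBnonneg d
  nlinarith [hMbig, hmpos]

lemma euclid_norm_sq (n : ℕ) (z : EuclideanSpace ℝ (Fin n)) : ‖z‖^2 = ∑ i, z i ^ 2 := by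
  rw [EuclideanSpace.norm_eq, Real.sq_sqrt (Finset.sum_nonneg fun i _ => sq_nonneg _)]
  exact Finset.sum_congr rfl fun i _ => by rw [Real.norm_eq_abs, sq_abs]

/-- Largest eigenvalue of random Rademacher outer products: for `V̄₁, …, V̄_m` i.i.d. uniform on
`{-1/2, 1/2}ⁿ` and `Ā_m = (1/m)·∑ V̄ᵢV̄ᵢᵀ`, we have `P(λ_max(Ā_m) > 425/32) ≤ exp(8n - m/2)`,
where `λ_max(Ā_m) > c` is expressed as the existence of a vector `x` with
`xᵀĀ_m x > c·‖x‖₂²`. -/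
theorem lambda_max_random_outer_products (n m : ℕ) (hn : 0 < n) (hm : 0 < m) :
    (PMF.uniformOfFintype (Fin m → Fin n → Bool)).toMeasure
      {V | ∃ x : Fin n → ℝ,
        (425 / 32 : ℝ) * ∑ i, (x i) ^ 2
          < x ⬝ᵥ ((m : ℝ)⁻¹ • ∑ j,
              vecMulVec (fun i => if V j i then (1 / 2 : ℝ) else -(1 / 2))
                (fun i => if V j i then (1 / 2 : ℝ) else -(1 / 2))) *ᵥ x}
      ≤ ENNReal.ofReal (Real.exp (8 * (n : ℝ) - (m : ℝ) / 2)) := by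
  obtain ⟨N, hNcard, hN1, hNnet⟩ := net_exists n hn
  have hsub : {V : Fin m → Fin n → Bool | ∃ x : Fin n → ℝ,
        (425 / 32 : ℝ) * ∑ i, (x i) ^ 2
          < x ⬝ᵥ ((m : ℝ)⁻¹ • ∑ j,
              vecMulVec (fun i => if V j i then (1 / 2 : ℝ) else -(1 / 2))
                (fun i => if V j i then (1 / 2 : ℝ) else -(1 / 2))) *ᵥ x} ⊆
      ⋃ y ∈ N, {V : Fin m → Fin n → Bool |
        (425/64 : ℝ) * m < ∑ j, (∑ i, (if V j i then (1/2:ℝ) else -(1/2)) * y i)^2} := by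
    intro V hV
    obtain ⟨x, hx⟩ := hV
    rw [quad_form_id n m (fun j i => if V j i then (1/2:ℝ) else -(1/2)) x] at hx
    obtain ⟨y, hyN, hy⟩ := det_reduce n m hn hm
      (fun j i => if V j i then (1/2:ℝ) else -(1/2)) N hN1 hNnet x hx
    exact Set.mem_biUnion hyN hy
  refine le_trans (measure_mono hsub) ?_
  refine le_trans (measure_biUnion_finset_le N _) ?_
  have hone : ∀ y ∈ N,
      (PMF.uniformOfFintype (Fin m → Fin n → Bool)).toMeasure
        {V : Fin m → Fin n → Bool |
          (425/64 : ℝ) * m < ∑ j, (∑ i, (if V j i then (1/2:ℝ) else -(1/2)) * y i)^2}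
        ≤ ENNReal.ofReal (Real.exp (-(m:ℝ)/2)) := by
    intro y hyN
    have hy2 : ∑ i, y i ^ 2 = 1 := by
      rw [← euclid_norm_sq n y, hN1 y hyN, one_pow]
    exact chernoff_y n m hn hm y hy2
  calc ∑ y ∈ N, (PMF.uniformOfFintype (Fin m → Fin n → Bool)).toMeasure
        {V : Fin m → Fin n → Bool |
          (425/64 : ℝ) * m < ∑ j, (∑ i, (if V j i then (1/2:ℝ) else -(1/2)) * y i)^2}
      ≤ ∑ _y ∈ N, ENNReal.ofReal (Real.exp (-(m:ℝ)/2)) := Finset.sum_le_sum hone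
    _ = (N.card : ℝ≥0∞) * ENNReal.ofReal (Real.exp (-(m:ℝ)/2)) := by
        rw [Finset.sum_const, nsmul_eq_mul]
    _ ≤ ((9^n : ℕ) : ℝ≥0∞) * ENNReal.ofReal (Real.exp (-(m:ℝ)/2)) := by
        exact mul_le_mul_left (by exact_mod_cast hNcard) _
    _ = ENNReal.ofReal ((9:ℝ)^n * Real.exp (-(m:ℝ)/2)) := by
        rw [ENNReal.ofReal_mul (by positivity)]
        congr 1
        rw [← ENNReal.ofReal_natCast]
        congr 1
        push_cast
        ring
    _ ≤ ENNReal.ofReal (Real.exp (8 * (n : ℝ) - (m : ℝ) / 2)) := by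
        apply ENNReal.ofReal_le_ofReal
        have h9 : (9:ℝ) ≤ Real.exp 8 := by
          have := Real.add_one_le_exp (8:ℝ)
          linarith
        have h9n : (9:ℝ)^n ≤ Real.exp (8 * n) := by
          calc (9:ℝ)^n ≤ (Real.exp 8)^n := pow_le_pow_left₀ (by norm_num) h9 n
            _ = Real.exp (8 * n) := by rw [← Real.exp_nat_mul]; ring_nf
        calc (9:ℝ)^n * Real.exp (-(m:ℝ)/2) ≤ Real.exp (8*n) * Real.exp (-(m:ℝ)/2) :=
            mul_le_mul_of_nonneg_right h9n (Real.exp_pos _).le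
          _ = Real.exp (8 * (n : ℝ) - (m : ℝ) / 2) := by rw [← Real.exp_add]; ring_nf
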